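/- Let f(θ,ξ) = (θ+ω, f_θ(ξ)) be a continuous quasiperiodically forced map on 𝕋¹ × M with ω irrational, and let 𝒜 be a compact f-invariant set that is pinched (some fiber 𝒜_θ is a single point). Then the set of θ ∈ 𝕋¹ at which 𝒜 is pinched is residual in 𝕋¹. -/

import Mathlib

open Set

lemma dense_zsmul_irrational (ω : ℝ) (hω : Irrational ω) :
    DenseRange (fun k : ℤ => k • (ω : AddCircle (1 : ℝ))) := by
  set S : AddSubgroup ℝ := AddSubgroup.closure {1, ω} with hS
  have hdense : Dense (S : Set ℝ) := by
    rcases S.dense_or_cyclic with h | ⟨a, ha⟩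
    · exact h
    · exfalso
      have h1 : (1 : ℝ) ∈ S := AddSubgroup.subset_closure (by simp)
      have h2 : ω ∈ S := AddSubgroup.subset_closure (by simp)
      rw [ha, AddSubgroup.mem_closure_singleton] at h1 h2
      obtain ⟨m, hm⟩ := h1
      obtain ⟨k, hk⟩ := h2
      rw [zsmul_eq_mul] at hm hk
      have hm0 : (m : ℝ) ≠ 0 := by
        rintro h; rw [h, zero_mul] at hm; exact one_ne_zero hm.symm
      have key : ω * (m : ℝ) = (k : ℝ) := by
        calc ω * (m:ℝ) = ((k:ℝ) * a) * m := by rw [hk]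
        _ = (k:ℝ) * ((m:ℝ) * a) := by ring
        _ = k := by rw [hm, mul_one]
      refine hω ⟨(k : ℚ) / (m : ℚ), ?_⟩
      have hmq : ((m:ℚ):ℝ) ≠ 0 := by push_cast; exact hm0
      push_cast
      field_simp
      linarith [key]
  have hcont : Continuous ((↑) : ℝ → AddCircle (1 : ℝ)) := AddCircle.continuous_mk' 1
  have hsurj : Function.Surjective ((↑) : ℝ → AddCircle (1 : ℝ)) :=
    QuotientAddGroup.mk'_surjective _
  have himg : Dense (((↑) : ℝ → AddCircle (1 : ℝ)) '' S) :=
    hsurj.denseRange.dense_image hcont hdense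
  refine himg.mono ?_
  have hle : S ≤ AddSubgroup.comap (QuotientAddGroup.mk' (AddSubgroup.zmultiples (1:ℝ)))
      (AddSubgroup.zmultiples ((ω : AddCircle (1 : ℝ)))) := by
    rw [hS, AddSubgroup.closure_le]
    rintro y (rfl | rfl) <;>
      simp only [SetLike.mem_coe, AddSubgroup.mem_comap, QuotientAddGroup.mk'_apply]
    · have : ((1:ℝ) : AddCircle (1:ℝ)) = 0 := (AddCircle.coe_eq_zero_iff _).mpr ⟨1, by simp⟩
      rw [this]; exact zero_mem _
    · exact AddSubgroup.mem_zmultiples _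
  rintro _ ⟨x, hx, rfl⟩
  have hx2 := hle hx
  rw [AddSubgroup.mem_comap] at hx2
  rw [← AddSubgroup.coe_zmultiples]
  exact hx2


section Aux
variable {M : Type*} [MetricSpace M]

theorem pinched_set_residual_aux
    (ω : ℝ) (hω : Irrational ω)
    (F : AddCircle (1 : ℝ) → M → M)
    (f : AddCircle (1 : ℝ) × M → AddCircle (1 : ℝ) × M)
    (hf : ∀ p, f p = (p.1 + (ω : AddCircle (1 : ℝ)), F p.1 p.2))
    (hcont : Continuous f)
    (A : Set (AddCircle (1 : ℝ) × M)) (hA : IsCompact A)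
    (hinv : f '' A = A)
    (hpinch : ∃ θ : AddCircle (1 : ℝ), ∃ ξ : M, {ξ' : M | (θ, ξ') ∈ A} = {ξ}) :
    {θ : AddCircle (1 : ℝ) | ∃ ξ : M, {ξ' : M | (θ, ξ') ∈ A} = {ξ}} ∈
      residual (AddCircle (1 : ℝ)) := by
  obtain ⟨θ₀, ξ₀, hθ₀⟩ := hpinch
  set ωc : AddCircle (1 : ℝ) := (ω : AddCircle (1 : ℝ)) with hωc
  -- forward invariance
  have hfwd : ∀ θ ξ, (θ, ξ) ∈ A → (θ + ωc, F θ ξ) ∈ A := by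
    intro θ ξ h
    have h2 : f (θ, ξ) ∈ A := hinv ▸ Set.mem_image_of_mem f h
    rwa [hf] at h2
  -- backward invariance
  have hbwd : ∀ θ ξ', (θ + ωc, ξ') ∈ A → ∃ ξ, (θ, ξ) ∈ A ∧ F θ ξ = ξ' := by
    intro θ ξ' h
    rw [← hinv] at h
    obtain ⟨⟨θ₁, ξ₁⟩, hmem, heq⟩ := h
    rw [hf] at heq
    obtain ⟨h1, h2⟩ := Prod.mk.injEq .. ▸ heq
    have hθ1 : θ₁ = θ := by
      have := h1
      simpa using add_right_cancel this
    subst hθ1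
    exact ⟨ξ₁, hmem, h2⟩
  -- singleton fibers propagate forward
  have hstep : ∀ θ ξ, {ξ' : M | (θ, ξ') ∈ A} = {ξ} →
      {ξ' : M | (θ + ωc, ξ') ∈ A} = {F θ ξ} := by
    intro θ ξ hθ
    ext ξ''
    simp only [mem_setOf_eq, mem_singleton_iff]
    constructor
    · intro h
      obtain ⟨ξ₁, h₁, rfl⟩ := hbwd θ ξ'' h
      have : ξ₁ ∈ {ξ' : M | (θ, ξ') ∈ A} := h₁
      rw [hθ, mem_singleton_iff] at this
      rw [this]
    · rintro rfl
      apply hfwd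
      have : ξ ∈ {ξ' : M | (θ, ξ') ∈ A} := by rw [hθ]; rfl
      exact this
  -- fibers along the forward orbit of θ₀ are singletons
  have hsing : ∀ k : ℕ, ∃ ξ, {ξ' : M | (θ₀ + k • ωc, ξ') ∈ A} = {ξ} := by
    intro k
    induction k with
    | zero => exact ⟨ξ₀, by simpa using hθ₀⟩
    | succ k ih =>
      obtain ⟨ξ, hξ⟩ := ih
      refine ⟨F (θ₀ + k • ωc) ξ, ?_⟩
      have : θ₀ + (k + 1) • ωc = (θ₀ + k • ωc) + ωc := by
        rw [succ_nsmul, add_assoc]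
      rw [this]
      exact hstep _ _ hξ
  -- every fiber is nonempty
  have hdorbit : ∀ θ₁ : AddCircle (1:ℝ), DenseRange (fun k : ℤ => θ₁ + k • ωc) := by
    intro θ₁
    have hz : DenseRange (fun k : ℤ => k • ωc) := dense_zsmul_irrational ω hω
    have : (fun k : ℤ => θ₁ + k • ωc) = (fun x => θ₁ + x) ∘ (fun k : ℤ => k • ωc) := rfl
    rw [this]
    exact DenseRange.comp (Function.Surjective.denseRange (add_left_surjective θ₁)) hz
      (continuous_add_left θ₁)
  have hne : ∀ θ : AddCircle (1:ℝ), ∃ ξ, (θ, ξ) ∈ A := by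
    have hNc : IsClosed (Prod.fst '' A) := (hA.image continuous_fst).isClosed
    have horb : ∀ k : ℤ, θ₀ + k • ωc ∈ Prod.fst '' A := by
      intro k
      induction k using Int.induction_on with
      | zero =>
        refine ⟨(θ₀, ξ₀), ?_, by simp⟩
        have : ξ₀ ∈ {ξ' : M | (θ₀, ξ') ∈ A} := by rw [hθ₀]; rfl
        exact this
      | succ k ih =>
        obtain ⟨⟨θ₁, ξ₁⟩, hmem, hfst⟩ := ih
        refine ⟨(θ₁ + ωc, F θ₁ ξ₁), hfwd _ _ hmem, ?_⟩
        simp only at hfst ⊢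
        rw [hfst]
        push_cast
        rw [add_zsmul, one_zsmul, add_assoc]
      | pred k ih =>
        obtain ⟨⟨θ₁, ξ₁⟩, hmem, hfst⟩ := ih
        simp only at hfst
        obtain ⟨⟨θ₂, ξ₂⟩, hmem2, heq⟩ : (θ₁, ξ₁) ∈ f '' A := hinv.symm ▸ hmem
        rw [hf] at heq
        have h1 : θ₂ + ωc = θ₁ := congrArg Prod.fst heq
        refine ⟨(θ₂, ξ₂), hmem2, ?_⟩
        simp only
        apply add_right_cancel (b := ωc)
        rw [h1, hfst, sub_zsmul, one_zsmul]
        abel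
    have hNdense : Dense (Prod.fst '' A) :=
      ((hdorbit θ₀).mono (range_subset_iff.mpr horb))
    have hNuniv : Prod.fst '' A = univ := hNc.closure_eq ▸ hNdense.closure_eq
    intro θ
    have : θ ∈ Prod.fst '' A := hNuniv ▸ mem_univ θ
    obtain ⟨⟨θ', ξ⟩, hmem, hfst⟩ := this
    simp only at hfst
    exact ⟨ξ, by rwa [hfst] at hmem⟩
  -- the bad sets are closed
  set C : ℕ → Set (AddCircle (1:ℝ)) := fun n =>
    {θ | ∃ ξ ξ', (θ, ξ) ∈ A ∧ (θ, ξ') ∈ A ∧ (1 : ℝ) / (n + 1) ≤ dist ξ ξ'} with hC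
  have hCclosed : ∀ n, IsClosed (C n) := by
    intro n
    set K : Set ((AddCircle (1:ℝ) × M) × (AddCircle (1:ℝ) × M)) :=
      {pq | pq.1 ∈ A ∧ pq.2 ∈ A ∧ pq.1.1 = pq.2.1 ∧ (1 : ℝ) / (n + 1) ≤ dist pq.1.2 pq.2.2}
    have hc1 : Continuous fun pq : (AddCircle (1:ℝ) × M) × (AddCircle (1:ℝ) × M) =>
        pq.1.1 := by fun_prop
    have hc2 : Continuous fun pq : (AddCircle (1:ℝ) × M) × (AddCircle (1:ℝ) × M) =>
        pq.2.1 := by fun_prop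
    have hc3 : Continuous fun pq : (AddCircle (1:ℝ) × M) × (AddCircle (1:ℝ) × M) =>
        dist pq.1.2 pq.2.2 := by fun_prop
    have hKclosed : IsClosed K := by
      refine IsClosed.inter (hA.isClosed.preimage continuous_fst) ?_
      refine IsClosed.inter (hA.isClosed.preimage continuous_snd) ?_
      exact IsClosed.inter (isClosed_eq hc1 hc2) (isClosed_le continuous_const hc3)
    have hKcompact : IsCompact K :=
      (hA.prod hA).of_isClosed_subset hKclosed (fun pq hpq => ⟨hpq.1, hpq.2.1⟩)
    have himg : C n = (fun pq => pq.1.1) '' K := by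
      ext θ
      constructor
      · rintro ⟨ξ, ξ', h1, h2, h3⟩
        exact ⟨((θ, ξ), (θ, ξ')), ⟨h1, h2, rfl, h3⟩, rfl⟩
      · rintro ⟨⟨⟨θ1, ξ⟩, ⟨θ2, ξ'⟩⟩, ⟨h1, h2, h3, h4⟩, rfl⟩
        simp only at h3 h4 ⊢
        subst h3
        exact ⟨ξ, ξ', h1, h2, h4⟩
    rw [himg]
    exact (hKcompact.image hc1).isClosed
  -- the good sets are open and dense
  have hBopen : ∀ n, IsOpen (C n)ᶜ := fun n => (hCclosed n).isOpen_compl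
  have hBdense : ∀ n, Dense (C n)ᶜ := by
    intro n
    have hnsmul : DenseRange (fun k : ℕ => θ₀ + k • ωc) := by
      have hz : DenseRange (fun k : ℤ => k • ωc) := dense_zsmul_irrational ω hω
      have hn' : DenseRange (fun k : ℕ => k • ωc) := denseRange_zsmul_iff_nsmul.mp hz
      have : (fun k : ℕ => θ₀ + k • ωc) = (fun x => θ₀ + x) ∘ (fun k : ℕ => k • ωc) := rfl
      rw [this]
      exact DenseRange.comp (Function.Surjective.denseRange (add_left_surjective θ₀)) hn'
        (continuous_add_left θ₀)
    refine hnsmul.mono (range_subset_iff.mpr ?_)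
    intro k
    obtain ⟨ξ, hξ⟩ := hsing k
    intro ⟨ξ₁, ξ₂, h1, h2, h3⟩
    have e1 : ξ₁ = ξ := by
      have : ξ₁ ∈ {ξ' : M | (θ₀ + k • ωc, ξ') ∈ A} := h1
      rwa [hξ, mem_singleton_iff] at this
    have e2 : ξ₂ = ξ := by
      have : ξ₂ ∈ {ξ' : M | (θ₀ + k • ωc, ξ') ∈ A} := h2
      rwa [hξ, mem_singleton_iff] at this
    rw [e1, e2, dist_self] at h3
    have : (0:ℝ) < 1 / (n + 1) := by positivity
    linarith
  -- conclude
  have hres : (⋂ n, (C n)ᶜ) ∈ residual (AddCircle (1:ℝ)) :=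
    countable_iInter_mem.mpr fun n => residual_of_dense_open (hBopen n) (hBdense n)
  refine Filter.mem_of_superset hres ?_
  intro θ hθ
  simp only [mem_iInter, mem_compl_iff] at hθ
  obtain ⟨ξ, hξ⟩ := hne θ
  refine ⟨ξ, ?_⟩
  ext ξ'
  simp only [mem_setOf_eq, mem_singleton_iff]
  constructor
  · intro h
    by_contra hne'
    have hd : 0 < dist ξ' ξ := dist_pos.mpr hne'
    obtain ⟨n, hn⟩ := exists_nat_one_div_lt hd
    exact hθ n ⟨ξ', ξ, h, hξ, le_of_lt hn⟩
  · rintro rfl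
    exact hξ

end Aux


/-- For a continuous quasiperiodically forced map over an irrational
rotation, the set of `θ` at which a compact invariant pinched set `𝒜` is pinched
is residual in the circle. -/
theorem pinched_set_residual {M : Type*} [MetricSpace M]
    (ω : ℝ) (hω : Irrational ω)
    (F : AddCircle (1 : ℝ) → M → M)
    (f : AddCircle (1 : ℝ) × M → AddCircle (1 : ℝ) × M)
    (hf : ∀ p, f p = (p.1 + (ω : AddCircle (1 : ℝ)), F p.1 p.2))
    (hcont : Continuous f)
    (A : Set (AddCircle (1 : ℝ) × M)) (hA : IsCompact A)
    (hinv : f '' A = A)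
    (hpinch : ∃ θ : AddCircle (1 : ℝ), ∃ ξ : M, {ξ' : M | (θ, ξ') ∈ A} = {ξ}) :
    {θ : AddCircle (1 : ℝ) | ∃ ξ : M, {ξ' : M | (θ, ξ') ∈ A} = {ξ}} ∈
      residual (AddCircle (1 : ℝ)) :=
  pinched_set_residual_aux ω hω F f hf hcont A hA hinv hpinch
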